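/- arXiv:2405.12051 — 2 statements merged into one kernel-verified Lean document; each statement's English description precedes it below -/
import Mathlib

section
/- If a sequence of convex functions Pᵢ : ℝ → ℝ converges pointwise to a convex function P : ℝ → ℝ, then for every α in the interior of the domain of the Legendre–Fenchel transform P* of P, the transforms converge: lim_{i→∞} Pᵢ*(α) = P*(α), where Q*(α) = inf_{q∈ℝ}(Q(q) − qα). -/
/-- Chord inequality for convex functions, denominator-cleared form. -/
private lemma chord (g : ℝ → ℝ) (hg : ConvexOn ℝ Set.univ g) {x y z : ℝ}
    (h1 : x < y) (h2 : y < z) :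
    (z - x) * g y ≤ (z - y) * g x + (y - x) * g z := by
  have hzx : (0:ℝ) < z - x := by linarith
  have key := hg.2 (Set.mem_univ x) (Set.mem_univ z)
    (div_nonneg (by linarith : (0:ℝ) ≤ z - y) hzx.le)
    (div_nonneg (by linarith : (0:ℝ) ≤ y - x) hzx.le)
    (by field_simp; ring)
  simp only [smul_eq_mul] at key
  have harg : (z-y)/(z-x) * x + (y-x)/(z-x) * z = y := by field_simp; ring
  rw [harg] at key
  rw [div_mul_eq_mul_div, div_mul_eq_mul_div, ← add_div,
    le_div_iff₀ hzx] at key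
  linarith

set_option maxHeartbeats 1000000 in
/-- If a sequence of (finite) convex functions `Pᵢ : ℝ → ℝ` converges
pointwise to a convex function `P : ℝ → ℝ`, then at every interior point `α` of the
domain of the Legendre–Fenchel transform `P*`, one has `Pᵢ*(α) → P*(α)`, where
`Q*(α) = inf_q (Q(q) − q·α)`. -/
theorem legendre_fenchel_converges (P : ℕ → ℝ → ℝ) (Q : ℝ → ℝ)
    (hP : ∀ i, ConvexOn ℝ Set.univ (P i)) (hQ : ConvexOn ℝ Set.univ Q)
    (hconv : ∀ q : ℝ, Filter.Tendsto (fun i => P i q) Filter.atTop (nhds (Q q)))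
    (α : ℝ)
    (hα : α ∈ interior {a : ℝ | BddBelow (Set.range fun q => Q q - q * a)}) :
    Filter.Tendsto (fun i => sInf (Set.range fun q => P i q - q * α)) Filter.atTop
      (nhds (sInf (Set.range fun q => Q q - q * α))) := by
  have hBdd : BddBelow (Set.range fun q : ℝ => Q q - q * α) := by
    have h := interior_subset hα
    simpa only [Set.mem_setOf_eq] using h
  have hrne : (Set.range fun q : ℝ => Q q - q * α).Nonempty :=
    Set.range_nonempty _
  obtain ⟨m, hm⟩ : ∃ m : ℝ, m = sInf (Set.range fun q : ℝ => Q q - q * α) := ⟨_, rfl⟩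
  rw [← hm]
  have hfm : ∀ q : ℝ, m ≤ Q q - q * α := by
    intro q; rw [hm]; exact csInf_le hBdd ⟨q, rfl⟩
  -- pointwise convergence of the shifted functions
  have near : ∀ q : ℝ, ∀ r : ℝ, 0 < r →
      ∀ᶠ i in Filter.atTop, |(P i q - q * α) - (Q q - q * α)| < r := by
    intro q r hr
    have ht : Filter.Tendsto (fun i => P i q - q * α) Filter.atTop
        (nhds (Q q - q * α)) := (hconv q).sub tendsto_const_nhds
    filter_upwards [Metric.tendsto_nhds.mp ht r hr] with i hi
    rw [Real.dist_eq] at hi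
    exact hi
  -- convexity of shifted functions
  have hgc : ∀ i, ConvexOn ℝ Set.univ (fun q => P i q - q * α) := by
    intro i
    refine ⟨convex_univ, ?_⟩
    intro x _ y _ s t hs ht hst
    simp only [smul_eq_mul]
    have hcv := (hP i).2 (Set.mem_univ x) (Set.mem_univ y) hs ht hst
    simp only [smul_eq_mul] at hcv
    nlinarith [hcv]
  -- coercivity from interior point
  rw [mem_interior_iff_mem_nhds, Metric.mem_nhds_iff] at hα
  obtain ⟨e0, he0, hball⟩ := hα
  obtain ⟨e, he⟩ : ∃ e : ℝ, e = e0 / 2 := ⟨_, rfl⟩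
  have he' : 0 < e := by rw [he]; positivity
  have hee0 : e < e0 := by rw [he]; linarith
  have hmemN : BddBelow (Set.range fun q => Q q - q * (α - e)) := by
    have hmem1 : α - e ∈ Metric.ball α e0 := by
      simp only [Metric.mem_ball, Real.dist_eq]
      rw [abs_lt]; constructor <;> linarith
    simpa only [Set.mem_setOf_eq] using hball hmem1
  have hmemP : BddBelow (Set.range fun q => Q q - q * (α + e)) := by
    have hmem1 : α + e ∈ Metric.ball α e0 := by
      simp only [Metric.mem_ball, Real.dist_eq]
      rw [abs_lt]; constructor <;> linarith
    simpa only [Set.mem_setOf_eq] using hball hmem1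
  obtain ⟨cN, hcN⟩ := hmemN
  obtain ⟨cP, hcP⟩ := hmemP
  have hcoerN : ∀ q : ℝ, cN - q * e ≤ Q q - q * α := by
    intro q
    have h0 : cN ≤ Q q - q * (α - e) := hcN ⟨q, rfl⟩
    nlinarith [h0]
  have hcoerP : ∀ q : ℝ, cP + q * e ≤ Q q - q * α := by
    intro q
    have h0 : cP ≤ Q q - q * (α + e) := hcP ⟨q, rfl⟩
    nlinarith [h0]
  -- near-minimizer
  obtain ⟨y₀, ⟨q₀, rfl⟩, hq₀⟩ := (csInf_lt_iff hBdd hrne).mp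
    (show sInf (Set.range fun q : ℝ => Q q - q * α) < m + 1/4 by rw [← hm]; linarith)
  -- endpoints
  obtain ⟨a, ha⟩ : ∃ a : ℝ, a = min (q₀ - 1) ((cN - (m+1))/e) := ⟨_, rfl⟩
  obtain ⟨b, hb⟩ : ∃ b : ℝ, b = max (q₀ + 1) ((m + 1 - cP)/e) := ⟨_, rfl⟩
  have hfa : m + 1 ≤ Q a - a * α := by
    have h1 : a ≤ (cN - (m+1))/e := by rw [ha]; exact min_le_right _ _
    have h2 : a * e ≤ cN - (m+1) := (le_div_iff₀ he').mp h1
    have := hcoerN a; linarith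
  have hfb : m + 1 ≤ Q b - b * α := by
    have h1 : (m + 1 - cP)/e ≤ b := by rw [hb]; exact le_max_right _ _
    have h2 : m + 1 - cP ≤ b * e := (div_le_iff₀ he').mp h1
    have := hcoerP b; linarith
  have haq₀ : a < q₀ := by
    have : a ≤ q₀ - 1 := by rw [ha]; exact min_le_left _ _
    linarith
  have hq₀b : q₀ < b := by
    have : q₀ + 1 ≤ b := by rw [hb]; exact le_max_left _ _
    linarith
  have hab : a < b := lt_trans haq₀ hq₀b
  -- key uniform lower bound
  have key : ∀ ε : ℝ, 0 < ε → ∀ᶠ i in Filter.atTop, ∀ q, m - ε ≤ P i q - q * α := by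
    intro ε hε
    obtain ⟨b', hb'⟩ : ∃ b' : ℝ, b' = b + 2 := ⟨_, rfl⟩
    obtain ⟨K, hK⟩ : ∃ K : ℝ, K = (Q b' - b' * α) + 1 - m + ε / 2 := ⟨_, rfl⟩
    have hKpos : 0 < K := by
      have := hfm b'; rw [hK]; linarith
    obtain ⟨δ, hδ⟩ : ∃ δ : ℝ, δ = min 1 (ε / (2 * K)) := ⟨_, rfl⟩
    have hδpos : 0 < δ := by
      rw [hδ]; exact lt_min one_pos (by positivity)
    have hδ1 : δ ≤ 1 := by rw [hδ]; exact min_le_left _ _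
    have hδK : δ * K ≤ ε / 2 := by
      have hh : δ ≤ ε / (2 * K) := by rw [hδ]; exact min_le_right _ _
      have h2 : δ * K ≤ (ε / (2 * K)) * K := mul_le_mul_of_nonneg_right hh hKpos.le
      have h3 : (ε / (2 * K)) * K = ε / 2 := by field_simp
      linarith
    obtain ⟨N, hN⟩ : ∃ N : ℕ, N = ⌈(b - a) / δ⌉₊ := ⟨_, rfl⟩
    have E5 : ∀ᶠ i in Filter.atTop, ∀ k ∈ Finset.range (N+1),
        m - ε/2 ≤ P i (a + (k:ℝ)*δ) - (a + (k:ℝ)*δ)*α := by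
      rw [Filter.eventually_all_finset]
      intro k _
      filter_upwards [near (a + (k:ℝ)*δ) (ε/2) (by positivity)] with i hi
      have h1 := hfm (a + (k:ℝ)*δ)
      have h2 := (abs_lt.mp hi).1
      linarith
    filter_upwards [near q₀ (1/4) (by norm_num), near a (1/4) (by norm_num),
      near b (1/4) (by norm_num), near b' 1 one_pos, E5] with i h1 h2 h3 h4 h5
    have h1' : P i q₀ - q₀*α ≤ m + 1/2 := by
      have := (abs_lt.mp h1).2; linarith
    have h2' : m + 3/4 ≤ P i a - a*α := by
      have := (abs_lt.mp h2).1; linarith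
    have h3' : m + 3/4 ≤ P i b - b*α := by
      have := (abs_lt.mp h3).1; linarith
    have h4' : P i b' - b'*α ≤ (Q b' - b'*α) + 1 := by
      have := (abs_lt.mp h4).2; linarith
    intro q
    rcases le_or_gt q a with hqa | haq
    · -- left of a
      rcases hqa.eq_or_lt with rfl | hlt
      · linarith
      · have hc := chord _ (hgc i) hlt haq₀
        have e1 : (q₀ - q) * (m + 3/4) ≤ (q₀ - q) * (P i a - a*α) :=
          mul_le_mul_of_nonneg_left h2' (by linarith)
        have e2 : (a - q) * (P i q₀ - q₀*α) ≤ (a - q) * (m + 1/2) :=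
          mul_le_mul_of_nonneg_left h1' (by linarith)
        have e5 : (q₀ - a) * (m - ε) ≤ (q₀ - a) * (P i q - q*α) := by
          linarith [hc, e1, e2, mul_pos (sub_pos.mpr haq₀) hε, sub_pos.mpr hlt]
        exact le_of_mul_le_mul_left e5 (by linarith)
    · rcases le_or_gt b q with hbq | hqb
      · -- right of b
        rcases hbq.eq_or_lt with rfl | hlt
        · linarith
        · have hc := chord _ (hgc i) hq₀b hlt
          have e1 : (q - q₀) * (m + 3/4) ≤ (q - q₀) * (P i b - b*α) :=
            mul_le_mul_of_nonneg_left h3' (by linarith)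
          have e2 : (q - b) * (P i q₀ - q₀*α) ≤ (q - b) * (m + 1/2) :=
            mul_le_mul_of_nonneg_left h1' (by linarith)
          have e5 : (b - q₀) * (m - ε) ≤ (b - q₀) * (P i q - q*α) := by
            linarith [hc, e1, e2, mul_pos (sub_pos.mpr hq₀b) hε, sub_pos.mpr hlt]
          exact le_of_mul_le_mul_left e5 (by linarith)
      · -- inside (a, b)
        have hqa0 : (0:ℝ) ≤ (q - a)/δ := div_nonneg (by linarith) hδpos.le
        obtain ⟨k, hkdef⟩ : ∃ k : ℕ, k = ⌈(q - a)/δ⌉₊ := ⟨_, rfl⟩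
        have hk1 : (q - a)/δ ≤ (k:ℝ) := by rw [hkdef]; exact Nat.le_ceil _
        have hk2 : (k:ℝ) < (q - a)/δ + 1 := by
          rw [hkdef]; exact Nat.ceil_lt_add_one hqa0
        have hkN : k ≤ N := by
          rw [hkdef, hN]
          refine Nat.ceil_le_ceil ?_
          rw [div_le_div_iff₀ hδpos hδpos]
          nlinarith [mul_le_mul_of_nonneg_right (show q - a ≤ b - a by linarith) hδpos.le]
        obtain ⟨t, htdef⟩ : ∃ t : ℝ, t = a + (k:ℝ) * δ := ⟨_, rfl⟩
        have hqt : q ≤ t := by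
          have := (div_le_iff₀ hδpos).mp hk1
          rw [htdef]; linarith
        have htq : t - q ≤ δ := by
          have h2 := mul_lt_mul_of_pos_right hk2 hδpos
          have h3 : (q - a)/δ * δ = q - a := div_mul_cancel₀ _ hδpos.ne'
          rw [htdef]; linarith [h2, h3]
        have hgt : m - ε/2 ≤ P i t - t*α := by
          rw [htdef]
          exact h5 k (Finset.mem_range.mpr (Nat.lt_succ_of_le hkN))
        rcases hqt.eq_or_lt with heq | hlt
        · rw [heq]; linarith
        · have htb' : t < b' := by rw [hb']; linarith
          have hc := chord _ (hgc i) hlt htb'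
          have hs1 : 1 ≤ b' - t := by rw [hb']; linarith
          have e1 : (t - q) * (P i b' - b'*α) ≤ (t - q) * (K + m - ε/2) := by
            apply mul_le_mul_of_nonneg_left ?_ (by linarith)
            rw [hK]; linarith
          have e2 : (b' - q) * (m - ε/2) ≤ (b' - q) * (P i t - t*α) :=
            mul_le_mul_of_nonneg_left hgt (by linarith)
          have e3 : (t - q) * K ≤ δ * K :=
            mul_le_mul_of_nonneg_right htq hKpos.le
          have e4 : ε/2 ≤ (b' - t) * (ε/2) := by
            have := mul_le_mul_of_nonneg_right hs1 (by positivity : (0:ℝ) ≤ ε/2)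
            linarith
          have e5 : (b' - t) * (m - ε) ≤ (b' - t) * (P i q - q*α) := by
            linarith [hc, e1, e2, e3, e4, hδK]
          exact le_of_mul_le_mul_left e5 (by linarith)
  -- conclusion
  rw [Metric.tendsto_nhds]
  intro ε hε
  obtain ⟨y₁, ⟨q₁, rfl⟩, hq₁⟩ := (csInf_lt_iff hBdd hrne).mp
    (show sInf (Set.range fun q : ℝ => Q q - q * α) < m + ε/4 by rw [← hm]; linarith)
  filter_upwards [key (ε/2) (by positivity), near q₁ (ε/4) (by positivity)] with i hk hn
  have hBd_i : BddBelow (Set.range fun q => P i q - q * α) :=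
    ⟨m - ε/2, by rintro y ⟨q, rfl⟩; exact hk q⟩
  have hup : sInf (Set.range fun q => P i q - q*α) ≤ P i q₁ - q₁*α :=
    csInf_le hBd_i ⟨q₁, rfl⟩
  have hlo : m - ε/2 ≤ sInf (Set.range fun q => P i q - q*α) :=
    le_csInf (Set.range_nonempty _) (by rintro y ⟨q, rfl⟩; exact hk q)
  have hup2 : P i q₁ - q₁*α < m + ε/2 := by
    have := (abs_lt.mp hn).2; linarith
  rw [Real.dist_eq, abs_lt]
  constructor <;> linarith
end

section
/- Entropy Distribution Principle: Let f be a continuous map on a metric space X and Y ⊆ X. Suppose there exist constants h ≥ 0, δ > 0, a Borel probability measure μ with μ(Y) > 0, and n₀ ∈ ℕ such that μ(B_n(x,δ)) ≤ e^{−n·h} for every n ≥ n₀ and every Bowen ball B_n(x,δ) intersecting Y. Then the Bowen topological entropy of f on Y at scale δ satisfies h_top(f,Y,δ) ≥ h. -/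
open scoped ENNReal

/-- The `(n,δ)`-Bowen ball centered at `x`. -/
def bowenBall {X : Type*} [MetricSpace X] (f : X → X) (n : ℕ) (x : X) (ε : ℝ) : Set X :=
  {y | ∀ j < n, dist (f^[j] x) (f^[j] y) < ε}

/-- The Carathéodory set function
`m_{ε,h}(Y) = lim_{N→∞} inf{ Σᵢ e^{−h·nᵢ} : Y ⊆ ⋃ᵢ B_{nᵢ}(xᵢ,ε), nᵢ ≥ N }`. -/
noncomputable def bowenM {X : Type*} [MetricSpace X] (f : X → X) (Y : Set X)
    (ε h : ℝ) : ℝ≥0∞ :=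
  ⨆ N : ℕ, ⨅ (c : ℕ → X) (n : ℕ → ℕ)
    (_ : (∀ i, N ≤ n i) ∧ Y ⊆ ⋃ i, bowenBall f (n i) (c i) ε),
      ∑' i, ENNReal.ofReal (Real.exp (-h * n i))

/-- The critical exponent `h_top(f,Y,ε) = inf{h ≥ 0 : m_{ε,h}(Y) = 0}`. -/
noncomputable def bowenEntScale {X : Type*} [MetricSpace X] (f : X → X) (Y : Set X)
    (ε : ℝ) : ℝ≥0∞ :=
  sInf {H : ℝ≥0∞ | ∃ h : ℝ, 0 ≤ h ∧ H = ENNReal.ofReal h ∧ bowenM f Y ε h = 0}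

/-- Entropy Distribution Principle: if a Borel probability measure `μ`
satisfies `μ(Y) > 0` and `μ(B_n(x,δ)) ≤ e^{−n·h}` for all `n ≥ n₀` and all Bowen balls
`B_n(x,δ)` intersecting `Y`, then `h_top(f,Y,δ) ≥ h`. -/
theorem entropy_distribution_principle {X : Type*} [MetricSpace X] [MeasurableSpace X]
    [BorelSpace X] (f : X → X) (hf : Continuous f) (Y : Set X)
    (h δ : ℝ) (hh : 0 ≤ h) (hδ : 0 < δ)
    (μ : MeasureTheory.Measure X) [MeasureTheory.IsProbabilityMeasure μ]
    (hY : 0 < μ Y) (n₀ : ℕ)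
    (hball : ∀ n, n₀ ≤ n → ∀ x : X, (bowenBall f n x δ ∩ Y).Nonempty →
      μ (bowenBall f n x δ) ≤ ENNReal.ofReal (Real.exp (-h * n))) :
    ENNReal.ofReal h ≤ bowenEntScale f Y δ := by
  -- Key: for any h' ≤ h, bowenM f Y δ h' ≥ μ Y > 0.
  have key : ∀ h' : ℝ, h' ≤ h → μ Y ≤ bowenM f Y δ h' := by
    intro h' hh'
    refine le_trans ?_ (le_iSup _ n₀)
    refine le_iInf fun c => le_iInf fun n => le_iInf fun hc => ?_
    obtain ⟨hn, hcov⟩ := hc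
    have : μ Y ≤ ∑' i, μ (Y ∩ bowenBall f (n i) (c i) δ) := by
      calc μ Y ≤ μ (⋃ i, Y ∩ bowenBall f (n i) (c i) δ) := by
            apply MeasureTheory.measure_mono
            intro y hy
            obtain ⟨i, hi⟩ := Set.mem_iUnion.mp (hcov hy)
            exact Set.mem_iUnion.mpr ⟨i, hy, hi⟩
        _ ≤ _ := MeasureTheory.measure_iUnion_le _
    refine this.trans (ENNReal.tsum_le_tsum fun i => ?_)
    by_cases hne : (bowenBall f (n i) (c i) δ ∩ Y).Nonempty
    · calc μ (Y ∩ bowenBall f (n i) (c i) δ)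
          ≤ μ (bowenBall f (n i) (c i) δ) :=
            MeasureTheory.measure_mono Set.inter_subset_right
        _ ≤ ENNReal.ofReal (Real.exp (-h * n i)) := hball _ (hn i) _ hne
        _ ≤ ENNReal.ofReal (Real.exp (-h' * n i)) := by
            apply ENNReal.ofReal_le_ofReal
            apply Real.exp_le_exp.mpr
            have : (0:ℝ) ≤ (n i : ℝ) := Nat.cast_nonneg _
            nlinarith
    · have : Y ∩ bowenBall f (n i) (c i) δ = ∅ := by
        rw [Set.inter_comm]
        exact Set.not_nonempty_iff_eq_empty.mp hne
      simp [this]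
  refine le_sInf fun H hH => ?_
  obtain ⟨h', hh'0, rfl, hz⟩ := hH
  apply ENNReal.ofReal_le_ofReal
  by_contra hlt
  push_neg at hlt
  have := key h' hlt.le
  rw [hz] at this
  exact absurd (le_antisymm this zero_le) hY.ne'
end
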